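/- Let t ≥ 2 and let G be a graph with 2e(G) = M > 0, adjacency matrix A, and spectral radius λ. Then hom(K_{t,t}, G) ≥ λ^{2t(t-1)} / M^{t(t-2)}. -/

import Mathlib

open scoped Classical BigOperators

/-- Adjacency matrix of a simple graph on `Fin n`, with real entries. -/
noncomputable def adjMat {n : ℕ} (G : SimpleGraph (Fin n)) : Matrix (Fin n) (Fin n) ℝ :=
  fun i j => if G.Adj i j then 1 else 0

/-- Spectral radius (largest real eigenvalue) of a real matrix. -/
noncomputable def specRad {α : Type*} [Fintype α] (A : Matrix α α ℝ) : ℝ :=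
  sSup {μ : ℝ | ∃ x : α → ℝ, x ≠ 0 ∧ A.mulVec x = μ • x}

/-- The ℓ^p norm of a finitely supported real vector, for a real exponent `p`. -/
noncomputable def pNorm {α : Type*} [Fintype α] (p : ℝ) (x : α → ℝ) : ℝ :=
  (∑ i, |x i| ^ p) ^ (1 / p)

/-- The ℓ^p → ℓ^r operator norm of a real matrix. -/
noncomputable def opNorm {α β : Type*} [Fintype α] [Fintype β] (p r : ℝ)
    (A : Matrix β α ℝ) : ℝ :=
  sSup {c : ℝ | ∃ x : α → ℝ, x ≠ 0 ∧ c = pNorm r (A.mulVec x) / pNorm p x}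

open Finset Matrix

lemma jensen_pow {ι : Type*} [Fintype ι] (m : ℕ) (a f : ι → ℝ)
    (ha : ∀ i, 0 ≤ a i) (hf : ∀ i, 0 ≤ f i) :
    (∑ i, a i * f i) ^ (m + 1) ≤ (∑ i, a i) ^ m * ∑ i, a i * f i ^ (m + 1) := by
  rcases eq_or_lt_of_le (Finset.sum_nonneg fun i _ => ha i) with h0 | hT
  · have hz : ∀ i ∈ Finset.univ, a i = (0:ℝ) :=
      (Finset.sum_eq_zero_iff_of_nonneg (fun i _ => ha i)).mp h0.symm
    have h1 : ∀ i, a i * f i = 0 := fun i => by rw [hz i (Finset.mem_univ i), zero_mul]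
    have h2 : ∀ i, a i * f i ^ (m + 1) = 0 := fun i => by
      rw [hz i (Finset.mem_univ i), zero_mul]
    simp [h1, h2]
  · set T := ∑ i, a i with hTdef
    have jensen := (convexOn_pow (m + 1)).map_sum_le (t := Finset.univ)
      (w := fun i => a i / T) (p := f)
      (fun i _ => div_nonneg (ha i) hT.le)
      (by rw [← Finset.sum_div, div_self hT.ne'])
      (fun i _ => hf i)
    simp only [smul_eq_mul] at jensen
    have h1 : ∑ i, a i / T * f i = (∑ i, a i * f i) / T := by
      rw [Finset.sum_div]; congr 1; ext i; ring
    have h2 : ∑ i, a i / T * f i ^ (m + 1) = (∑ i, a i * f i ^ (m + 1)) / T := by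
      rw [Finset.sum_div]; congr 1; ext i; ring
    rw [h1, h2, div_pow, div_le_div_iff₀ (by positivity) hT] at jensen
    have h3 : (∑ i, a i * f i) ^ (m + 1) * T
        ≤ ((T : ℝ) ^ m * ∑ i, a i * f i ^ (m + 1)) * T := by
      calc (∑ i, a i * f i) ^ (m + 1) * T ≤ (∑ i, a i * f i ^ (m + 1)) * T ^ (m + 1) := jensen
        _ = ((T : ℝ) ^ m * ∑ i, a i * f i ^ (m + 1)) * T := by ring
    exact le_of_mul_le_mul_right h3 hT

lemma holder_pow {ι : Type*} [Fintype ι] (m : ℕ) (hm : 1 ≤ m) (u v z : ι → ℝ)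
    (hu : ∀ i, 0 ≤ u i) (hv : ∀ i, 0 ≤ v i) (hz : ∀ i, 0 ≤ z i)
    (huz : ∀ i, u i ^ (m + 1) = z i ^ m) :
    (∑ i, u i * v i) ^ (m + 1) ≤ (∑ i, z i) ^ m * ∑ i, v i ^ (m + 1) := by
  set F : ι → ℝ := fun i => if z i = 0 then 0 else u i * v i / z i with hF
  have hF0 : ∀ i, 0 ≤ F i := by
    intro i; simp only [hF]
    split
    · exact le_refl 0
    · exact div_nonneg (mul_nonneg (hu i) (hv i)) (hz i)
  have hu0 : ∀ i, z i = 0 → u i = 0 := by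
    intro i h
    have := huz i
    rw [h, zero_pow (by omega)] at this
    exact pow_eq_zero_iff (by omega) |>.mp this
  have key1 : ∀ i, z i * F i = u i * v i := by
    intro i; simp only [hF]
    split
    · rename_i h; rw [h, hu0 i h]; ring
    · rename_i h; field_simp
  have key2 : ∀ i, z i * F i ^ (m + 1) ≤ v i ^ (m + 1) := by
    intro i; simp only [hF]
    split
    · rename_i h; rw [h, zero_mul]; exact pow_nonneg (hv i) _
    · rename_i h
      have hzpos : 0 < z i := lt_of_le_of_ne (hz i) (Ne.symm h)
      rw [div_pow, mul_pow, huz i]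
      rw [div_eq_mul_inv, pow_succ (z i) m]
      have : z i * (z i ^ m * v i ^ (m + 1) * (z i ^ m * z i)⁻¹) = v i ^ (m + 1) := by
        field_simp
      rw [this]
  calc (∑ i, u i * v i) ^ (m + 1)
      = (∑ i, z i * F i) ^ (m + 1) := by simp_rw [key1]
    _ ≤ (∑ i, z i) ^ m * ∑ i, z i * F i ^ (m + 1) := jensen_pow m z F hz hF0
    _ ≤ (∑ i, z i) ^ m * ∑ i, v i ^ (m + 1) := by
        apply mul_le_mul_of_nonneg_left ?_ (pow_nonneg (Finset.sum_nonneg fun i _ => hz i) m)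
        exact Finset.sum_le_sum fun i _ => key2 i

lemma specRad_spec {n : ℕ} (hn : 0 < n) (A : Matrix (Fin n) (Fin n) ℝ) (hA : A.IsHermitian) :
    (∃ v : Fin n → ℝ, v ≠ 0 ∧ A.mulVec v = specRad A • v) ∧
    (∀ μ : ℝ, ∀ x : Fin n → ℝ, x ≠ 0 → A.mulVec x = μ • x → μ ≤ specRad A) ∧
    0 ≤ (n : ℝ) * specRad A - Matrix.trace A := by
  have hne : Nonempty (Fin n) := ⟨⟨0, hn⟩⟩
  set S : Set ℝ := {μ : ℝ | ∃ x : Fin n → ℝ, x ≠ 0 ∧ A.mulVec x = μ • x} with hS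
  have hrange : S = Set.range hA.eigenvalues := by
    apply Set.Subset.antisymm
    · rintro μ ⟨x, hx0, hx⟩
      set U : Matrix (Fin n) (Fin n) ℝ := (hA.eigenvectorUnitary : Matrix (Fin n) (Fin n) ℝ) with hU
      have hUU : star U * U = 1 := (Unitary.mem_iff.mp hA.eigenvectorUnitary.2).1
      have hUU' : U * star U = 1 := (Unitary.mem_iff.mp hA.eigenvectorUnitary.2).2
      set y : Fin n → ℝ := (star U).mulVec x with hy
      have hUy : U.mulVec y = x := by
        rw [hy, Matrix.mulVec_mulVec, hUU', Matrix.one_mulVec]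
      have hy0 : y ≠ 0 := by
        intro h
        apply hx0
        rw [← hUy, h, Matrix.mulVec_zero]
      have hdiag : star U * A * U = diagonal (RCLike.ofReal ∘ hA.eigenvalues) := by
        have := hA.conjStarAlgAut_star_eigenvectorUnitary
        rw [Unitary.conjStarAlgAut_star_apply] at this
        exact this
      have h1 : (star U * A * U).mulVec y = μ • y := by
        have e1 : star U * A * U * star U = star U * A := by
          rw [Matrix.mul_assoc (star U * A), hUU', Matrix.mul_one]
        rw [hy, Matrix.mulVec_mulVec, e1, ← Matrix.mulVec_mulVec, hx, Matrix.mulVec_smul]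
      rw [hdiag] at h1
      obtain ⟨j, hj⟩ := Function.ne_iff.mp hy0
      have h2 := congrFun h1 j
      rw [Matrix.mulVec_diagonal] at h2
      simp only [Pi.smul_apply, smul_eq_mul, Function.comp_apply] at h2
      exact ⟨j, by simpa using mul_right_cancel₀ hj h2⟩
    · rintro μ ⟨i, rfl⟩
      refine ⟨⇑(hA.eigenvectorBasis i), ?_, hA.mulVec_eigenvectorBasis i⟩
      intro h
      have h1 : ‖hA.eigenvectorBasis i‖ = 1 := hA.eigenvectorBasis.orthonormal.1 i
      have h2 : hA.eigenvectorBasis i = 0 := by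
        ext j
        exact congrFun h j
      rw [h2] at h1
      simp at h1
  have hSne : S.Nonempty := by
    rw [hrange]; exact Set.range_nonempty _
  have hSfin : S.Finite := by rw [hrange]; exact Set.finite_range _
  have hmem : specRad A ∈ S := hSne.csSup_mem hSfin
  have hbound : ∀ μ : ℝ, ∀ x : Fin n → ℝ, x ≠ 0 → A.mulVec x = μ • x → μ ≤ specRad A := by
    intro μ x hx0 hx
    exact le_csSup hSfin.bddAbove ⟨x, hx0, hx⟩
  refine ⟨hmem, hbound, ?_⟩
  -- trace = sum of eigenvalues
  have htr : Matrix.trace A = ∑ i, hA.eigenvalues i := by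
    have hUU : star (hA.eigenvectorUnitary : Matrix (Fin n) (Fin n) ℝ) *
        (hA.eigenvectorUnitary : Matrix (Fin n) (Fin n) ℝ) = 1 :=
      (Unitary.mem_iff.mp hA.eigenvectorUnitary.2).1
    conv_lhs => rw [hA.spectral_theorem]
    simp only [Unitary.conjStarAlgAut_apply, Unitary.coe_star]
    rw [Matrix.trace_mul_cycle, hUU, Matrix.one_mul, Matrix.trace_diagonal]
    simp [Function.comp]
  have hle : ∀ i, hA.eigenvalues i ≤ specRad A := by
    intro i
    apply le_csSup hSfin.bddAbove
    rw [hrange]; exact ⟨i, rfl⟩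
  have : Matrix.trace A ≤ (n : ℝ) * specRad A := by
    rw [htr]
    calc ∑ i, hA.eigenvalues i ≤ ∑ _i : Fin n, specRad A := Finset.sum_le_sum fun i _ => hle i
      _ = (n : ℝ) * specRad A := by simp [mul_comm]
  linarith

noncomputable def homEquiv {n t : ℕ} (G : SimpleGraph (Fin n)) :
    (completeBipartiteGraph (Fin t) (Fin t) →g G) ≃
      {f : Fin t ⊕ Fin t → Fin n // ∀ i j, G.Adj (f (Sum.inl i)) (f (Sum.inr j))} where
  toFun φ := ⟨φ, fun i j => φ.map_rel (by simp)⟩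
  invFun f := ⟨f.1, by
    rintro (a | a) (b | b) h <;> simp at h
    · exact f.2 a b
    · exact (f.2 b a).symm⟩
  left_inv φ := by ext; rfl
  right_inv f := rfl

lemma hom_count {n t : ℕ} (G : SimpleGraph (Fin n)) :
    (Nat.card (completeBipartiteGraph (Fin t) (Fin t) →g G) : ℝ)
      = ∑ v : Fin t → Fin n, (∑ w : Fin n, ∏ j : Fin t, adjMat G w (v j)) ^ t := by
  rw [Nat.card_congr (homEquiv G), Nat.card_eq_fintype_card, Fintype.card_subtype]
  have step1 : ∀ f : Fin t ⊕ Fin t → Fin n,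
      (if (∀ i j, G.Adj (f (Sum.inl i)) (f (Sum.inr j))) then (1:ℝ) else 0)
        = ∏ i : Fin t, ∏ j : Fin t, adjMat G (f (Sum.inl i)) (f (Sum.inr j)) := by
    intro f
    unfold adjMat
    simp_rw [Finset.prod_boole, Finset.mem_univ, forall_true_left]
    rw [Finset.prod_boole]
    simp
  have step2 : ((Finset.univ.filter
      (fun f : Fin t ⊕ Fin t → Fin n => ∀ i j, G.Adj (f (Sum.inl i)) (f (Sum.inr j)))).card : ℝ)
      = ∑ f : Fin t ⊕ Fin t → Fin n,
          ∏ i : Fin t, ∏ j : Fin t, adjMat G (f (Sum.inl i)) (f (Sum.inr j)) := by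
    rw [← Finset.sum_boole]
    exact Finset.sum_congr rfl fun f _ => step1 f
  rw [step2]
  rw [← Equiv.sum_comp (Equiv.sumArrowEquivProdArrow (Fin t) (Fin t) (Fin n)).symm]
  rw [Fintype.sum_prod_type]
  rw [Finset.sum_comm]
  apply Finset.sum_congr rfl
  intro v _
  rw [Fintype.sum_pow]
  apply Finset.sum_congr rfl
  intro u _
  apply Finset.prod_congr rfl
  intro i _
  apply Finset.prod_congr rfl
  intro j _
  simp [Equiv.sumArrowEquivProdArrow]

lemma sum_adjMat {n : ℕ} (G : SimpleGraph (Fin n)) :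
    ∑ i, ∑ j, adjMat G i j = 2 * (Nat.card G.edgeSet : ℝ) := by
  have h1 : ∀ i, ∑ j, adjMat G i j = (G.degree i : ℝ) := by
    intro i
    unfold adjMat
    rw [Finset.sum_boole]
    congr 1
    rw [SimpleGraph.degree]
    congr 1
    ext j
    simp [SimpleGraph.mem_neighborFinset]
  simp_rw [h1]
  rw [← Nat.cast_sum]
  rw [G.sum_degrees_eq_twice_card_edges]
  have : Nat.card G.edgeSet = G.edgeFinset.card := by
    rw [Nat.card_eq_fintype_card, SimpleGraph.edgeFinset, Set.toFinset_card]
  rw [this]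
  push_cast
  ring

/-- Spectral Sidorenko inequality for K_{t,t}:
hom(K_{t,t}, G) ≥ λ(G)^{2t(t-1)} / M(G)^{t(t-2)} where M(G) = 2e(G) > 0. -/
theorem stmt1 (t : ℕ) (ht : 2 ≤ t) (n : ℕ) (G : SimpleGraph (Fin n))
    (hM : 0 < Nat.card G.edgeSet) :
    (Nat.card (completeBipartiteGraph (Fin t) (Fin t) →g G) : ℝ)
      ≥ specRad (adjMat G) ^ (2 * t * (t - 1))
          / (2 * (Nat.card G.edgeSet : ℝ)) ^ (t * (t - 2)) := by
  obtain ⟨s, rfl⟩ : ∃ s, t = s + 2 := ⟨t - 2, by omega⟩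
  set A := adjMat G with hA_def
  have hA0 : ∀ i j, 0 ≤ A i j := by
    intro i j; unfold A; unfold adjMat; split <;> norm_num
  have hA1 : ∀ i j, A i j ≤ 1 := by
    intro i j; unfold A; unfold adjMat; split <;> norm_num
  have hAsymm : ∀ i j, A i j = A j i := by
    intro i j; unfold A; unfold adjMat; rw [G.adj_comm]
  have hA_herm : A.IsHermitian := by
    ext i j
    simp only [Matrix.conjTranspose_apply, star_trivial]
    exact hAsymm j i
  have htr : Matrix.trace A = 0 := by
    unfold Matrix.trace
    apply Finset.sum_eq_zero
    intro i _
    unfold A; unfold adjMat Matrix.diag; simp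
  have hn : 0 < n := by
    have hne : Nonempty G.edgeSet := (Nat.card_pos_iff.mp hM).1
    obtain ⟨⟨e, he⟩⟩ := hne
    induction e with
    | h i j => exact i.pos
  obtain ⟨⟨v, hv0, hveq⟩, hbound, htrineq⟩ := specRad_spec hn A hA_herm
  set lam := specRad A with hlam_def
  have hlam0 : 0 ≤ lam := by
    rw [htr] at htrineq
    by_contra h
    push_neg at h
    have hcast : (0:ℝ) < (n:ℝ) := Nat.cast_pos.mpr hn
    nlinarith
  set x : Fin n → ℝ := fun i => |v i| with hx_def
  have hx0 : ∀ i, 0 ≤ x i := fun i => abs_nonneg _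
  obtain ⟨i0, hi0⟩ : ∃ i, 0 < x i := by
    obtain ⟨i, hi⟩ := Function.ne_iff.mp hv0
    exact ⟨i, abs_pos.mpr hi⟩
  set g : Fin n → ℝ := A.mulVec x with hg_def
  have hg_entry : ∀ i, g i = ∑ j, A i j * x j := by
    intro i; simp [hg_def, Matrix.mulVec, dotProduct]
  have hg0 : ∀ i, 0 ≤ g i := by
    intro i; rw [hg_entry]
    exact Finset.sum_nonneg fun j _ => mul_nonneg (hA0 i j) (hx0 j)
  have hg_ge : ∀ i, lam * x i ≤ g i := by
    intro i
    have h1 : lam * x i = |(A.mulVec v) i| := by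
      rw [hveq]
      simp only [Pi.smul_apply, smul_eq_mul, abs_mul, abs_of_nonneg hlam0]
      rfl
    have h2 : (A.mulVec v) i = ∑ j, A i j * v j := by
      simp [Matrix.mulVec, dotProduct]
    rw [h1, h2, hg_entry]
    calc |∑ j, A i j * v j| ≤ ∑ j, |A i j * v j| := Finset.abs_sum_le_sum_abs _ _
      _ = ∑ j, A i j * x j := by
          apply Finset.sum_congr rfl
          intro j _
          rw [abs_mul, abs_of_nonneg (hA0 i j)]
  -- y = x^(1/(s+1))
  set y : Fin n → ℝ := fun i => (x i) ^ ((s + 1 : ℝ)⁻¹) with hy_def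
  have hy0 : ∀ i, 0 ≤ y i := fun i => Real.rpow_nonneg (hx0 i) _
  have hyx : ∀ i, y i ^ (s + 1) = x i := by
    intro i
    rw [hy_def]
    rw [← Real.rpow_natCast ((x i) ^ ((s + 1 : ℝ)⁻¹)) (s + 1), ← Real.rpow_mul (hx0 i)]
    have hne : ((s : ℝ) + 1) ≠ 0 := by positivity
    have he : ((s + 1 : ℝ))⁻¹ * ((s + 1 : ℕ) : ℝ) = 1 := by
      push_cast
      field_simp
    rw [he, Real.rpow_one]
  have hy_pos : 0 < y i0 := Real.rpow_pos_of_pos hi0 _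
  set Pp := ∑ i, x i * y i with hPp_def
  set Qq := ∑ i, x i ^ (s + 2) with hQq_def
  set Nn := ∑ i, g i ^ (s + 2) with hNn_def
  set Sv := ∑ i, g i * x i ^ (s + 1) with hSv_def
  set M := 2 * (Nat.card G.edgeSet : ℝ) with hM_def
  set H := (Nat.card (completeBipartiteGraph (Fin (s+2)) (Fin (s+2)) →g G) : ℝ) with hH_def
  have hM_pos : 0 < M := by
    rw [hM_def]; positivity
  have hH0 : 0 ≤ H := Nat.cast_nonneg _
  have hPp_pos : 0 < Pp := by
    apply Finset.sum_pos' (fun i _ => mul_nonneg (hx0 i) (hy0 i))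
    exact ⟨i0, Finset.mem_univ i0, mul_pos hi0 hy_pos⟩
  have hQq_pos : 0 < Qq := by
    apply Finset.sum_pos' (fun i _ => pow_nonneg (hx0 i) _)
    exact ⟨i0, Finset.mem_univ i0, pow_pos hi0 _⟩
  have hSv0 : 0 ≤ Sv :=
    Finset.sum_nonneg fun i _ => mul_nonneg (hg0 i) (pow_nonneg (hx0 i) _)
  have hNn0 : 0 ≤ Nn := Finset.sum_nonneg fun i _ => pow_nonneg (hg0 i) _
  have hQq0 : 0 ≤ Qq := hQq_pos.le
  -- (d)
  have hd : lam ^ (s+2) * Qq ≤ Nn := by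
    rw [hQq_def, Finset.mul_sum]
    apply Finset.sum_le_sum
    intro i _
    calc lam ^ (s+2) * x i ^ (s+2) = (lam * x i) ^ (s+2) := (mul_pow _ _ _).symm
      _ ≤ g i ^ (s+2) := pow_le_pow_left₀ (mul_nonneg hlam0 (hx0 i)) (hg_ge i) _
  -- (b)
  have hb : (lam * Pp) ^ (s+1) ≤ M ^ s * Sv := by
    have sub1 : lam * Pp ≤ ∑ i, y i * g i := by
      rw [hPp_def, Finset.mul_sum]
      apply Finset.sum_le_sum
      intro i _
      calc lam * (x i * y i) = y i * (lam * x i) := by ring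
        _ ≤ y i * g i := mul_le_mul_of_nonneg_left (hg_ge i) (hy0 i)
    have sub2 : ∑ i, y i * g i = ∑ p : Fin n × Fin n, A p.1 p.2 * (y p.1 * x p.2) := by
      rw [Fintype.sum_prod_type]
      apply Finset.sum_congr rfl
      intro i _
      rw [hg_entry i, Finset.mul_sum]
      apply Finset.sum_congr rfl
      intro j _
      ring
    have hjen := jensen_pow s (fun p : Fin n × Fin n => A p.1 p.2)
      (fun p => y p.1 * x p.2) (fun p => hA0 p.1 p.2)
      (fun p => mul_nonneg (hy0 p.1) (hx0 p.2))
    have hMsum : ∑ p : Fin n × Fin n, A p.1 p.2 = M := by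
      rw [Fintype.sum_prod_type, hM_def, ← sum_adjMat G]
    have hfS : ∑ p : Fin n × Fin n, A p.1 p.2 * (y p.1 * x p.2) ^ (s+1) = Sv := by
      have e1 : ∀ p : Fin n × Fin n, A p.1 p.2 * (y p.1 * x p.2) ^ (s+1)
          = A p.1 p.2 * (x p.1 * x p.2 ^ (s+1)) := by
        intro p; rw [mul_pow, hyx]
      simp_rw [e1]
      rw [Fintype.sum_prod_type, Finset.sum_comm, hSv_def]
      apply Finset.sum_congr rfl
      intro j _
      rw [hg_entry j, Finset.sum_mul]
      apply Finset.sum_congr rfl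
      intro i _
      rw [hAsymm i j]
      ring
    calc (lam * Pp) ^ (s+1) ≤ (∑ i, y i * g i) ^ (s+1) := by
          apply pow_le_pow_left₀ (mul_nonneg hlam0 hPp_pos.le) sub1
      _ = (∑ p : Fin n × Fin n, A p.1 p.2 * (y p.1 * x p.2)) ^ (s+1) := by rw [sub2]
      _ ≤ (∑ p : Fin n × Fin n, A p.1 p.2) ^ s
            * ∑ p : Fin n × Fin n, A p.1 p.2 * (y p.1 * x p.2) ^ (s+1) := hjen
      _ = M ^ s * Sv := by rw [hMsum, hfS]
  -- (c)
  have hc : Sv ^ (s+2) ≤ Qq ^ (s+1) * Nn := by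
    have hold := holder_pow (s+1) (by omega) (fun i => x i ^ (s+1)) g (fun i => x i ^ (s+2))
      (fun i => pow_nonneg (hx0 i) _) hg0 (fun i => pow_nonneg (hx0 i) _)
      (fun i => by rw [← pow_mul, ← pow_mul]; ring_nf)
    have e1 : ∑ i, x i ^ (s+1) * g i = Sv := by
      rw [hSv_def]; apply Finset.sum_congr rfl; intro i _; ring
    rw [e1] at hold
    exact hold
  -- (a)
  have ha : Nn ^ (s+2) ≤ (Pp ^ (s+2)) ^ (s+1) * H := by
    set c : (Fin (s+2) → Fin n) → ℝ := fun w => ∑ z, ∏ j, A z (w j) with hc_def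
    have hc0 : ∀ w, 0 ≤ c w := by
      intro w
      exact Finset.sum_nonneg fun z _ =>
        Finset.prod_nonneg fun j _ => hA0 z (w j)
    have hH : H = ∑ w : Fin (s+2) → Fin n, c w ^ (s+2) := hom_count G
    have hsum_u : ∑ w : Fin (s+2) → Fin n, (∏ j, x (w j)) * c w = Nn := by
      have e1 : ∀ w : Fin (s+2) → Fin n, (∏ j, x (w j)) * c w
          = ∑ z, ∏ j, A z (w j) * x (w j) := by
        intro w
        simp only [hc_def]
        rw [mul_comm, Finset.sum_mul]
        apply Finset.sum_congr rfl
        intro z _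
        rw [← Finset.prod_mul_distrib]
      simp_rw [e1]
      rw [Finset.sum_comm]
      rw [hNn_def]
      apply Finset.sum_congr rfl
      intro z _
      rw [← Fintype.sum_pow (fun a => A z a * x a) (s+2)]
      rw [hg_entry z]
    have hsum_z : ∑ w : Fin (s+2) → Fin n, (∏ j, (x (w j) * y (w j))) = Pp ^ (s+2) := by
      rw [hPp_def, Fintype.sum_pow (fun a => x a * y a) (s+2)]
    have huz : ∀ w : Fin (s+2) → Fin n,
        (∏ j, x (w j)) ^ (s+2) = (∏ j, (x (w j) * y (w j))) ^ (s+1) := by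
      intro w
      rw [← Finset.prod_pow, ← Finset.prod_pow]
      apply Finset.prod_congr rfl
      intro j _
      rw [mul_pow, hyx]
      exact pow_succ _ _
    have hold := holder_pow (s+1) (by omega)
      (fun w : Fin (s+2) → Fin n => ∏ j, x (w j)) c
      (fun w => ∏ j, (x (w j) * y (w j)))
      (fun w => Finset.prod_nonneg fun j _ => hx0 (w j)) hc0
      (fun w => Finset.prod_nonneg fun j _ => mul_nonneg (hx0 (w j)) (hy0 (w j)))
      (fun w => huz w)
    rw [hsum_u, hsum_z] at hold
    rw [hH]
    exact hold
  -- combine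
  have key : lam ^ (2 * (s+2) * (s+1)) ≤ M ^ ((s+2) * s) * H := by
    have K1 : lam ^ ((s+1)*(s+2)) * Pp ^ ((s+1)*(s+2))
        ≤ M ^ (s*(s+2)) * (Qq ^ (s+1) * Nn) := by
      calc lam ^ ((s+1)*(s+2)) * Pp ^ ((s+1)*(s+2)) = ((lam * Pp) ^ (s+1)) ^ (s+2) := by
            rw [← mul_pow, ← pow_mul]
        _ ≤ (M ^ s * Sv) ^ (s+2) :=
            pow_le_pow_left₀ (pow_nonneg (mul_nonneg hlam0 hPp_pos.le) _) hb _
        _ = M ^ (s*(s+2)) * Sv ^ (s+2) := by rw [mul_pow, ← pow_mul]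
        _ ≤ M ^ (s*(s+2)) * (Qq ^ (s+1) * Nn) :=
            mul_le_mul_of_nonneg_left hc (pow_nonneg hM_pos.le _)
    have K2 : (lam ^ (s+2) * Qq) ^ (s+1) ≤ Nn ^ (s+1) :=
      pow_le_pow_left₀ (mul_nonneg (pow_nonneg hlam0 _) hQq0) hd _
    have K3 : lam ^ ((s+1)*(s+2)) * (lam ^ ((s+1)*(s+2)) * Pp ^ ((s+1)*(s+2)))
        ≤ lam ^ ((s+1)*(s+2)) * (M ^ (s*(s+2)) * (Qq ^ (s+1) * Nn)) :=
      mul_le_mul_of_nonneg_left K1 (pow_nonneg hlam0 _)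
    have e1 : lam ^ ((s+1)*(s+2)) * (M ^ (s*(s+2)) * (Qq ^ (s+1) * Nn))
        = M ^ (s*(s+2)) * ((lam ^ (s+2) * Qq) ^ (s+1) * Nn) := by
      have e1a : (lam ^ (s+2) * Qq) ^ (s+1) = lam ^ ((s+1)*(s+2)) * Qq ^ (s+1) := by
        rw [mul_pow (lam ^ (s+2)) Qq (s+1), ← pow_mul, Nat.mul_comm (s+2) (s+1)]
      rw [e1a]
      ring
    have K4 : M ^ (s*(s+2)) * ((lam ^ (s+2) * Qq) ^ (s+1) * Nn)
        ≤ M ^ (s*(s+2)) * (Nn ^ (s+1) * Nn) := by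
      apply mul_le_mul_of_nonneg_left ?_ (pow_nonneg hM_pos.le _)
      exact mul_le_mul_of_nonneg_right K2 hNn0
    have e2 : M ^ (s*(s+2)) * (Nn ^ (s+1) * Nn) = M ^ (s*(s+2)) * Nn ^ (s+2) := by
      rw [← pow_succ]
    have K5 : M ^ (s*(s+2)) * Nn ^ (s+2)
        ≤ M ^ (s*(s+2)) * ((Pp ^ (s+2)) ^ (s+1) * H) :=
      mul_le_mul_of_nonneg_left ha (pow_nonneg hM_pos.le _)
    have e3 : M ^ (s*(s+2)) * ((Pp ^ (s+2)) ^ (s+1) * H)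
        = (M ^ (s*(s+2)) * H) * Pp ^ ((s+1)*(s+2)) := by
      rw [← pow_mul, Nat.mul_comm (s+2) (s+1)]
      ring
    have e4 : lam ^ ((s+1)*(s+2)) * (lam ^ ((s+1)*(s+2)) * Pp ^ ((s+1)*(s+2)))
        = lam ^ (2*(s+2)*(s+1)) * Pp ^ ((s+1)*(s+2)) := by
      rw [← mul_assoc, ← pow_add]
      congr 2
      ring
    have Kfinal : lam ^ (2*(s+2)*(s+1)) * Pp ^ ((s+1)*(s+2))
        ≤ (M ^ (s*(s+2)) * H) * Pp ^ ((s+1)*(s+2)) := by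
      rw [← e4, ← e3]
      exact K3.trans (le_of_eq e1 |>.trans (K4.trans (le_of_eq e2 |>.trans K5)))
    have := le_of_mul_le_mul_right Kfinal (pow_pos hPp_pos _)
    calc lam ^ (2*(s+2)*(s+1)) ≤ M ^ (s*(s+2)) * H := this
      _ = M ^ ((s+2)*s) * H := by rw [Nat.mul_comm s (s+2)]
  -- finish
  have hgoal : lam ^ (2 * (s + 2) * (s + 2 - 1)) / M ^ ((s + 2) * (s + 2 - 2)) ≤ H := by
    have e1 : s + 2 - 1 = s + 1 := by omega
    have e2 : s + 2 - 2 = s := by omega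
    rw [e1, e2, div_le_iff₀ (by positivity)]
    calc lam ^ (2 * (s+2) * (s+1)) ≤ M ^ ((s+2) * s) * H := key
      _ = H * M ^ ((s+2) * s) := by ring
  exact hgoal
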